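/- For every connected graph G on n vertices and every k with 1 ≤ k ≤ n, G has at least n - k + 1 connected induced subgraphs of order k. -/

import Mathlib

open SimpleGraph

/-- The number of connected induced subgraphs of `G`, i.e. the number of nonempty
vertex subsets of `G` inducing a connected subgraph. -/
noncomputable def numConn {V : Type*} (G : SimpleGraph V) : ℕ :=
  Nat.card {s : Finset V // (G.induce (s : Set V)).Connected}

/-- The number of `k`-vertex connected induced subgraphs of `G`. -/
noncomputable def numConnK {V : Type*} (G : SimpleGraph V) (k : ℕ) : ℕ :=
  Nat.card {s : Finset V // s.card = k ∧ (G.induce (s : Set V)).Connected}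

/-- The number of connected induced subgraphs of `G` containing the vertex `v`. -/
noncomputable def numConnAt {V : Type*} (G : SimpleGraph V) (v : V) : ℕ :=
  Nat.card {s : Finset V // v ∈ s ∧ (G.induce (s : Set V)).Connected}

/-- The star graph on `Fin n`, with center `0`. -/
def starGraph (n : ℕ) : SimpleGraph (Fin n) :=
  SimpleGraph.fromRel (fun i _ => (i : ℕ) = 0)

/-- The tadpole graph `G_{p,q}` (for `p ≥ 3`): the path `0 - 1 - ⋯ - (p+q-1)` together with
the edge `{0, p-1}` closing a cycle of length `p`; the tail of length `q` hangs at `p-1`. -/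
def tadpole (p q : ℕ) : SimpleGraph (Fin (p + q)) :=
  SimpleGraph.fromRel (fun i j => (i : ℕ) + 1 = j ∨ ((i : ℕ) = 0 ∧ (j : ℕ) = p - 1))

/-- The banner graph `B_n` (for `n ≥ 4`): a `4`-cycle `0-1-2-3-0` with `n - 4` pendant
vertices attached to vertex `0`. -/
def banner (n : ℕ) : SimpleGraph (Fin n) :=
  SimpleGraph.fromRel (fun i j =>
    ((i : ℕ) + 1 = j ∧ (j : ℕ) ≤ 3) ∨ ((i : ℕ) = 0 ∧ (j : ℕ) = 3) ∨ ((i : ℕ) = 0 ∧ 4 ≤ (j : ℕ)))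

/-- The graph `Q_n` (for `n > 2`): the star on `n` vertices with center `0`, plus an edge
joining the two leaves `1` and `2`. -/
def Qgraph (n : ℕ) : SimpleGraph (Fin n) :=
  SimpleGraph.fromRel (fun i j => (i : ℕ) = 0 ∨ ((i : ℕ) = 1 ∧ (j : ℕ) = 2))

section Aux

variable {V : Type*} {G : SimpleGraph V}

lemma induce_singleton_connected (G : SimpleGraph V) (v : V) :
    (G.induce ({v} : Set V)).Connected := by
  have : Nonempty ({v} : Set V) := ⟨⟨v, rfl⟩⟩
  constructor
  intro a b
  have : a = b := Subtype.ext (a.2.trans b.2.symm)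
  subst this; rfl

lemma exists_boundary {t s : Set V} :
    ∀ {u w : t} (_ : (G.induce t).Walk u w), (u : V) ∈ s → (w : V) ∉ s →
      ∃ a b : t, (a : V) ∈ s ∧ (b : V) ∉ s ∧ G.Adj a b := by
  intro u w p
  induction p with
  | nil => intro h h'; exact absurd h h'
  | @cons u x w h q ih =>
    intro hu hw
    by_cases hx : (x : V) ∈ s
    · exact ih hx hw
    · exact ⟨u, x, hu, hx, h⟩

lemma grow [DecidableEq V] {s t : Finset V} (hst : s ⊆ t) (hs : (G.induce (s : Set V)).Connected)
    (ht : (G.induce (t : Set V)).Connected) (hlt : s.card < t.card) :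
    ∃ b, b ∈ t ∧ b ∉ s ∧ (G.induce ((insert b s : Finset V) : Set V)).Connected := by
  classical
  obtain ⟨⟨u, hu⟩⟩ := hs.nonempty
  obtain ⟨w, hw⟩ : (t \ s).Nonempty := by
    rw [← Finset.card_pos, Finset.card_sdiff_of_subset hst]; omega
  rw [Finset.mem_sdiff] at hw
  have hu' : u ∈ s := hu
  have hut : (u : V) ∈ (t : Set V) := hst hu'
  have hwt : (w : V) ∈ (t : Set V) := hw.1
  obtain ⟨p⟩ := ht ⟨u, hut⟩ ⟨w, hwt⟩
  obtain ⟨a, b, ha, hb, hab⟩ := exists_boundary p (s := (s : Set V)) hu' hw.2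
  refine ⟨b, b.2, hb, ?_⟩
  have : ((insert (b : V) s : Finset V) : Set V) = (s : Set V) ∪ {(b : V)} := by
    rw [Finset.coe_insert, Set.union_singleton]
  rw [this]
  exact connected_induce_union hs.preconnected (induce_singleton_connected G b).preconnected ha rfl hab

lemma exists_conn_subset [DecidableEq V] {t : Finset V} (ht : (G.induce (t : Set V)).Connected)
    {v : V} (hv : v ∈ t) :
    ∀ j, 1 ≤ j → j ≤ t.card → ∃ s, s ⊆ t ∧ v ∈ s ∧ s.card = j ∧
      (G.induce (s : Set V)).Connected := by
  classical
  intro j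
  induction j with
  | zero => omega
  | succ j ih =>
    intro _ hj
    rcases Nat.eq_zero_or_pos j with h0 | hpos
    · subst h0
      refine ⟨{v}, Finset.singleton_subset_iff.2 hv, Finset.mem_singleton_self v,
        Finset.card_singleton v, ?_⟩
      rw [Finset.coe_singleton]
      exact induce_singleton_connected G v
    · obtain ⟨s, hst, hvs, hcard, hconn⟩ := ih hpos (by omega)
      obtain ⟨b, hbt, hbs, hbconn⟩ := grow hst hconn ht (by omega)
      exact ⟨insert b s, Finset.insert_subset hbt hst, Finset.mem_insert_of_mem hvs,
        by rw [Finset.card_insert_of_notMem hbs, hcard], hbconn⟩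

lemma chain [Fintype V] [DecidableEq V] (hG : G.Connected) {k : ℕ} (hk1 : 1 ≤ k) :
    ∀ m, k + m ≤ Fintype.card V → ∃ (P : Finset V) (S : Fin (m + 1) → Finset V),
      P.card = k + m ∧ (G.induce (P : Set V)).Connected ∧
      (∀ i, S i ⊆ P ∧ (S i).card = k ∧ (G.induce (S i : Set V)).Connected) ∧
      Function.Injective S := by
  have huniv : (G.induce ((Finset.univ : Finset V) : Set V)).Connected := by
    rw [Finset.coe_univ]
    exact (induceUnivIso G).connected_iff.mpr hG
  intro m
  induction m with
  | zero =>
    intro hm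
    have hpos : 0 < Fintype.card V := by omega
    obtain ⟨v⟩ := Fintype.card_pos_iff.mp hpos
    obtain ⟨s, hsub, _, hcard, hconn⟩ := exists_conn_subset huniv (Finset.mem_univ v) k hk1
      (by simp; omega)
    exact ⟨s, fun _ => s, by omega, hconn,
      fun _ => ⟨Finset.Subset.refl s, hcard, hconn⟩, fun i j _ => by omega⟩
  | succ m ih =>
    intro hm
    obtain ⟨P, S, hPcard, hPconn, hS, hinj⟩ := ih (by omega)
    obtain ⟨b, -, hbP, hbconn⟩ := grow (Finset.subset_univ P) hPconn huniv
      (by simp only [Finset.card_univ]; omega)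
    have hbmem : b ∈ insert b P := Finset.mem_insert_self b P
    have hcard' : (insert b P).card = k + (m + 1) := by
      rw [Finset.card_insert_of_notMem hbP]; omega
    obtain ⟨T, hTsub, hbT, hTcard, hTconn⟩ := exists_conn_subset hbconn hbmem k hk1
      (by omega)
    refine ⟨insert b P, Fin.snoc S T, hcard', hbconn, ?_, ?_⟩
    · intro i
      refine Fin.lastCases ?_ ?_ i
      · rw [Fin.snoc_last]; exact ⟨hTsub, hTcard, hTconn⟩
      · intro j
        rw [Fin.snoc_castSucc]
        exact ⟨(hS j).1.trans (Finset.subset_insert b P), (hS j).2⟩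
    · intro i j hij
      rcases Fin.eq_castSucc_or_eq_last i with ⟨i', rfl⟩ | rfl <;>
        rcases Fin.eq_castSucc_or_eq_last j with ⟨j', rfl⟩ | rfl
      · rw [Fin.snoc_castSucc, Fin.snoc_castSucc] at hij
        exact congrArg Fin.castSucc (hinj hij)
      · rw [Fin.snoc_castSucc, Fin.snoc_last] at hij
        exact absurd ((hS i').1 (hij ▸ hbT)) hbP
      · rw [Fin.snoc_last, Fin.snoc_castSucc] at hij
        exact absurd ((hS j').1 (hij ▸ hbT)) hbP
      · rfl

end Aux

theorem stmt2 {V : Type*} [Fintype V] (G : SimpleGraph V) (hG : G.Connected) (k : ℕ)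
    (hk1 : 1 ≤ k) (hk2 : k ≤ Fintype.card V) :
    Fintype.card V - k + 1 ≤ numConnK G k := by
  classical
  obtain ⟨P, S, -, -, hS, hinj⟩ := chain hG hk1 (Fintype.card V - k) (by omega)
  let f : Fin (Fintype.card V - k + 1) → {s : Finset V // s.card = k ∧
      (G.induce (s : Set V)).Connected} := fun i => ⟨S i, (hS i).2.1, (hS i).2.2⟩
  have hfinj : Function.Injective f := fun i j h => hinj (Subtype.ext_iff.mp h)
  have := Nat.card_le_card_of_injective f hfinj
  simpa [numConnK] using this
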